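/- Let w, w′, v, v′ be words over Ū_H ∪ {t, t⁻¹} in HNN reduced form. If v ←_m w, w ∼ w′ and w′ →_m v′ (elementary cancellations at the same position m), then v ∼ v′. -/

import Mathlib

/-- `S` is a free basis of the group `G`: the induced map from the free group
on `S` is an isomorphism. -/
def IsFreeBasis {G : Type*} [Group G] (S : Set G) : Prop :=
  Function.Bijective ⇑(FreeGroup.lift (Subtype.val : S → G))

/-- Letters of words over `Ū_H ∪ {t, t⁻¹}`: an element of the free group `H`
(intended to lie in `Ū_H`), the stable letter `t`, or its inverse. -/
inductive HLetter (X : Type*) where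
  | gen : FreeGroup X → HLetter X
  | t : HLetter X
  | tinv : HLetter X

namespace HnnPaper

variable {X : Type*}

/-- A word `w` is a word over `S ∪ {t, t⁻¹}` if all its group letters lie in `S`. -/
def WordOver (S : Set (FreeGroup X)) (w : List (HLetter X)) : Prop :=
  ∀ l ∈ w, ∀ u : FreeGroup X, l = HLetter.gen u → u ∈ S

/-- A word consisting only of group letters (no `t`, `t⁻¹`). -/
def IsGenOnly (w : List (HLetter X)) : Prop :=
  ∀ l ∈ w, ∃ u : FreeGroup X, l = HLetter.gen u

/-- The element of `H` represented by a `t`-free word (treats `t`-letters as `1`). -/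
def evalH (w : List (HLetter X)) : FreeGroup X :=
  (w.map fun l => match l with
    | HLetter.gen u => u
    | _ => 1).prod

/-- `w` is in HNN reduced form: it has no subword `t⁻¹ w_i t` with `w_i` a `t`-free
word representing an element of `A = ⟨U_A⟩`, and no subword `t w_i t⁻¹` with `w_i`
a `t`-free word representing an element of `B = ⟨U_B⟩`. -/
def HNNReducedWord (UA UB : Set (FreeGroup X)) (w : List (HLetter X)) : Prop :=
  (∀ p mid s, w = p ++ [HLetter.tinv] ++ mid ++ [HLetter.t] ++ s →
      IsGenOnly mid → evalH mid ∉ Subgroup.closure UA) ∧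
  (∀ p mid s, w = p ++ [HLetter.t] ++ mid ++ [HLetter.tinv] ++ s →
      IsGenOnly mid → evalH mid ∉ Subgroup.closure UB)

variable {UA UB : Set (FreeGroup X)}

/-- The element of the HNN extension `H* = H ∗_{t,φ:A→B}` represented by a word. -/
def evalStar (φ : ↥(Subgroup.closure UA) ≃* ↥(Subgroup.closure UB))
    (w : List (HLetter X)) :
    HNNExtension (FreeGroup X) (Subgroup.closure UA) (Subgroup.closure UB) φ :=
  (w.map fun l => match l with
    | HLetter.gen u => HNNExtension.of u
    | HLetter.t => HNNExtension.t
    | HLetter.tinv => HNNExtension.t⁻¹).prod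

/-- Elementary addition: insertion of a pair `u u⁻¹` with `u ∈ Ū_H`. -/
def ElemAdd (UH : Set (FreeGroup X)) (w w' : List (HLetter X)) : Prop :=
  ∃ (p s : List (HLetter X)) (u : FreeGroup X), u ∈ UH ∪ UH⁻¹ ∧ w = p ++ s ∧
    w' = p ++ [HLetter.gen u, HLetter.gen u⁻¹] ++ s

/-- Elementary cancellation: deletion of a pair `u u⁻¹` with `u ∈ Ū_H`. -/
def ElemDel (UH : Set (FreeGroup X)) (w w' : List (HLetter X)) : Prop :=
  ElemAdd UH w' w

/-- Elementary semicommutation: replacement of `u_a t` by `t u_b`, or of `t⁻¹ u_a`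
by `u_b t⁻¹` (or conversely in either case), where `u_a ∈ Ū_A`, `u_b ∈ Ū_B` and
`φ(u_a) = u_b`. -/
def ElemSemi (φ : ↥(Subgroup.closure UA) ≃* ↥(Subgroup.closure UB))
    (w w' : List (HLetter X)) : Prop :=
  ∃ (p s : List (HLetter X)) (a : ↥(Subgroup.closure UA)), (a : FreeGroup X) ∈ UA ∪ UA⁻¹ ∧
    ((w = p ++ [HLetter.gen ↑a, HLetter.t] ++ s ∧
      w' = p ++ [HLetter.t, HLetter.gen ↑(φ a)] ++ s) ∨
     (w = p ++ [HLetter.t, HLetter.gen ↑(φ a)] ++ s ∧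
      w' = p ++ [HLetter.gen ↑a, HLetter.t] ++ s) ∨
     (w = p ++ [HLetter.tinv, HLetter.gen ↑a] ++ s ∧
      w' = p ++ [HLetter.gen ↑(φ a), HLetter.tinv] ++ s) ∨
     (w = p ++ [HLetter.gen ↑(φ a), HLetter.tinv] ++ s ∧
      w' = p ++ [HLetter.tinv, HLetter.gen ↑a] ++ s))

/-- An elementary operation: an elementary addition, cancellation or semicommutation. -/
def ElemOp (UH : Set (FreeGroup X)) (φ : ↥(Subgroup.closure UA) ≃* ↥(Subgroup.closure UB))
    (w w' : List (HLetter X)) : Prop :=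
  ElemAdd UH w w' ∨ ElemDel UH w w' ∨ ElemSemi φ w w'

/-- `w ∼ w'`: a finite sequence of elementary semicommutations turns `w` into `w'`. -/
def Sim (φ : ↥(Subgroup.closure UA) ≃* ↥(Subgroup.closure UB)) :
    List (HLetter X) → List (HLetter X) → Prop :=
  Relation.ReflTransGen (ElemSemi φ)

/-- The word `t^n` (a run of `t`'s or of `t⁻¹`'s). -/
def tPow (n : ℤ) : List (HLetter X) :=
  if 0 ≤ n then List.replicate n.toNat HLetter.t
  else List.replicate (-n).toNat HLetter.tinv

/-- The word `t^{n₀} u₁ t^{n₁} ⋯ u_k t^{n_k}` determined by `n₀` and the list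
`[(u₁,n₁),…,(u_k,n_k)]`. -/
def blockWord (n0 : ℤ) (l : List (FreeGroup X × ℤ)) : List (HLetter X) :=
  tPow n0 ++ l.flatMap (fun p => HLetter.gen p.1 :: tPow p.2)

/-- `w →_m v`: `w ≡ t^{n₀} u₁ t^{n₁} ⋯ u_k t^{n_k}` with `u_{m+1} ≡ u_m⁻¹` and
`n_m = 0`, and `v` is obtained from `w` by the elementary cancellation of the pair
`u_m u_{m+1}` (so `t^{n_{m-1}}` becomes `t^{n_{m-1}+n_{m+1}}`). -/
def CancelAt (m : ℕ) (w v : List (HLetter X)) : Prop :=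
  ∃ (n0 : ℤ) (pre post : List (FreeGroup X × ℤ)) (u : FreeGroup X) (n' : ℤ),
    pre.length + 1 = m ∧
    w = blockWord n0 (pre ++ [(u, 0), (u⁻¹, n')] ++ post) ∧
    ((pre = [] ∧ v = blockWord (n0 + n') post) ∨
     (∃ pre' u' nl, pre = pre' ++ [(u', nl)] ∧
        v = blockWord n0 (pre' ++ [(u', nl + n')] ++ post)))

/-- `w ⇝_m v`: there are HNN reduced words `w′, v′` with `w ∼ w′ →_m v′ ∼ v`. -/
def RsaAt (φ : ↥(Subgroup.closure UA) ≃* ↥(Subgroup.closure UB)) (m : ℕ)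
    (w v : List (HLetter X)) : Prop :=
  ∃ w' v', HNNReducedWord UA UB w' ∧ HNNReducedWord UA UB v' ∧
    Sim φ w w' ∧ CancelAt m w' v' ∧ Sim φ v' v

/-- `w ⇝ v`: `w ⇝_m v` for some `m`. -/
def Rsa (φ : ↥(Subgroup.closure UA) ≃* ↥(Subgroup.closure UB))
    (w v : List (HLetter X)) : Prop :=
  ∃ m, RsaAt φ m w v

/-- `w ≿ v`: either `w ∼ v` or there is a sequence `w ≡ w₀ ⇝ w₁ ⇝ ⋯ ⇝ w_k ≡ v`
with `k ≥ 1`. -/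
def Succsim (φ : ↥(Subgroup.closure UA) ≃* ↥(Subgroup.closure UB))
    (w v : List (HLetter X)) : Prop :=
  Sim φ w v ∨ Relation.TransGen (Rsa φ) w v

/-- `v` is in most reduced form: it is HNN reduced and no `v ⇝ v'` is possible. -/
def MostReduced (φ : ↥(Subgroup.closure UA) ≃* ↥(Subgroup.closure UB))
    (v : List (HLetter X)) : Prop :=
  HNNReducedWord UA UB v ∧ ∀ v', ¬ Rsa φ v v'

/-- `MRF(w)`: the set of words `v` with `v ≾ w` that are in most reduced form. -/
def MRF (φ : ↥(Subgroup.closure UA) ≃* ↥(Subgroup.closure UB))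
    (w : List (HLetter X)) : Set (List (HLetter X)) :=
  {v | Succsim φ w v ∧ MostReduced φ v}

/-- The partial bijection `Ū_A → Ū_B` induced by `φ`, as a relation on `H`. -/
def PhiRel (φ : ↥(Subgroup.closure UA) ≃* ↥(Subgroup.closure UB))
    (u v : FreeGroup X) : Prop :=
  ∃ a : ↥(Subgroup.closure UA), (a : FreeGroup X) ∈ UA ∪ UA⁻¹ ∧
    (a : FreeGroup X) = u ∧ ((φ a : ↥(Subgroup.closure UB)) : FreeGroup X) = v

/-- `v = φ^n(u)` for `n ∈ ℕ`. -/
def PhiPowN (φ : ↥(Subgroup.closure UA) ≃* ↥(Subgroup.closure UB)) :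
    ℕ → FreeGroup X → FreeGroup X → Prop
  | 0 => Eq
  | (n + 1) => fun u v => ∃ w, PhiPowN φ n u w ∧ PhiRel φ w v

/-- `v = φ^z(u)` for `z ∈ ℤ`. -/
def PhiZPow (φ : ↥(Subgroup.closure UA) ≃* ↥(Subgroup.closure UB)) (z : ℤ)
    (u v : FreeGroup X) : Prop :=
  if 0 ≤ z then PhiPowN φ z.toNat u v else PhiPowN φ (-z).toNat v u

end HnnPaper

namespace HnnPaper

variable {X : Type*} {UA UB : Set (FreeGroup X)}

/-- Number of `gen` letters in a word. -/
def genCount : List (HLetter X) → ℕ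
  | [] => 0
  | HLetter.gen _ :: rest => genCount rest + 1
  | HLetter.t :: rest => genCount rest
  | HLetter.tinv :: rest => genCount rest

/-- Delete the `j`-th `gen` letter (0-based, counting only `gen` letters). -/
def delGenAt : ℕ → List (HLetter X) → List (HLetter X)
  | _, [] => []
  | j, HLetter.gen u :: rest =>
      if j = 0 then rest else HLetter.gen u :: delGenAt (j - 1) rest
  | j, HLetter.t :: rest => HLetter.t :: delGenAt j rest
  | j, HLetter.tinv :: rest => HLetter.tinv :: delGenAt j rest

lemma genCount_append (p s : List (HLetter X)) :
    genCount (p ++ s) = genCount p + genCount s := by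
  induction p with
  | nil => simp [genCount]
  | cons l rest ih => cases l <;> simp [genCount, ih] <;> omega

lemma delGenAt_append_lt {j : ℕ} {p : List (HLetter X)} (s : List (HLetter X))
    (h : j < genCount p) :
    delGenAt j (p ++ s) = delGenAt j p ++ s := by
  induction p generalizing j with
  | nil => simp [genCount] at h
  | cons l rest ih =>
    cases l with
    | gen u =>
      by_cases hj : j = 0
      · subst hj; simp [delGenAt]
      · simp only [genCount] at h
        simp only [List.cons_append, delGenAt, if_neg hj]
        rw [ih (by omega)]
    | t => simp only [genCount] at h; simp [delGenAt, ih h]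
    | tinv => simp only [genCount] at h; simp [delGenAt, ih h]

lemma delGenAt_append_ge {j : ℕ} {p : List (HLetter X)} (s : List (HLetter X))
    (h : genCount p ≤ j) :
    delGenAt j (p ++ s) = p ++ delGenAt (j - genCount p) s := by
  induction p generalizing j with
  | nil => simp [genCount]
  | cons l rest ih =>
    cases l with
    | gen u =>
      simp only [genCount] at h
      have hj : j ≠ 0 := by omega
      simp only [List.cons_append, delGenAt, if_neg hj]
      rw [ih (by omega)]
      simp only [genCount]
      have : j - 1 - genCount rest = j - (genCount rest + 1) := by omega
      rw [this]
    | t => simp only [genCount] at h ⊢; simp [delGenAt, ih h, genCount]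
    | tinv => simp only [genCount] at h ⊢; simp [delGenAt, ih h, genCount]

lemma genCount_replicate_t (k : ℕ) :
    genCount (List.replicate k (HLetter.t : HLetter X)) = 0 := by
  induction k with
  | zero => simp [genCount]
  | succ n ih => simp [List.replicate_succ, genCount, ih]

lemma genCount_replicate_tinv (k : ℕ) :
    genCount (List.replicate k (HLetter.tinv : HLetter X)) = 0 := by
  induction k with
  | zero => simp [genCount]
  | succ n ih => simp [List.replicate_succ, genCount, ih]

lemma genCount_tPow (n : ℤ) : genCount (tPow n : List (HLetter X)) = 0 := by
  unfold tPow
  split <;> [exact genCount_replicate_t _; exact genCount_replicate_tinv _]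

lemma tPow_zero : (tPow 0 : List (HLetter X)) = [] := by simp [tPow]

lemma tPow_pos_last {a : ℤ} (h : 0 < a) :
    (tPow a : List (HLetter X)) = tPow (a - 1) ++ [HLetter.t] := by
  have h1 : (0:ℤ) ≤ a := h.le
  have h2 : (0:ℤ) ≤ a - 1 := by omega
  have h3 : a.toNat = (a - 1).toNat + 1 := by omega
  rw [tPow, tPow, if_pos h1, if_pos h2, h3, List.replicate_succ']

lemma tPow_pos_head {a : ℤ} (h : 0 < a) :
    (tPow a : List (HLetter X)) = HLetter.t :: tPow (a - 1) := by
  have h1 : (0:ℤ) ≤ a := h.le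
  have h2 : (0:ℤ) ≤ a - 1 := by omega
  have h3 : a.toNat = (a - 1).toNat + 1 := by omega
  rw [tPow, tPow, if_pos h1, if_pos h2, h3, List.replicate_succ]

lemma tPow_neg_head {a : ℤ} (h : a < 0) :
    (tPow a : List (HLetter X)) = HLetter.tinv :: tPow (a + 1) := by
  have h1 : ¬ (0:ℤ) ≤ a := by omega
  have h3 : (-a).toNat = (-(a+1)).toNat + 1 := by omega
  by_cases h2 : (0:ℤ) ≤ a + 1
  · have : a = -1 := by omega
    subst this
    simp [tPow]
  · rw [tPow, tPow, if_neg h1, if_neg h2, h3, List.replicate_succ]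

lemma tPow_neg_last {a : ℤ} (h : a < 0) :
    (tPow a : List (HLetter X)) = tPow (a + 1) ++ [HLetter.tinv] := by
  have h1 : ¬ (0:ℤ) ≤ a := by omega
  have h3 : (-a).toNat = (-(a+1)).toNat + 1 := by omega
  by_cases h2 : (0:ℤ) ≤ a + 1
  · have : a = -1 := by omega
    subst this
    simp [tPow]
  · rw [tPow, tPow, if_neg h1, if_neg h2, h3, List.replicate_succ']

lemma tPow_add_of {a b : ℤ} (h1 : ¬(0 < a ∧ b < 0)) (h2 : ¬(a < 0 ∧ 0 < b)) :
    (tPow (a + b) : List (HLetter X)) = tPow a ++ tPow b := by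
  rcases le_or_gt 0 a with ha | ha <;> rcases le_or_gt 0 b with hb | hb
  · have hab : (0:ℤ) ≤ a + b := by omega
    have h3 : (a+b).toNat = a.toNat + b.toNat := by omega
    rw [tPow, tPow, tPow, if_pos hab, if_pos ha, if_pos hb, h3, List.replicate_add]
  · have : a = 0 := by omega
    subst this
    simp [tPow_zero]
  · have : b = 0 := by omega
    subst this
    simp [tPow_zero]
  · have hab : ¬ (0:ℤ) ≤ a + b := by omega
    have ha' : ¬ (0:ℤ) ≤ a := by omega
    have hb' : ¬ (0:ℤ) ≤ b := by omega
    have h3 : (-(a+b)).toNat = (-a).toNat + (-b).toNat := by omega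
    rw [tPow, tPow, tPow, if_neg hab, if_neg ha', if_neg hb', h3, List.replicate_add]

lemma evalH_pair (u : FreeGroup X) :
    evalH [HLetter.gen u, HLetter.gen u⁻¹] = 1 := by
  simp [evalH]

lemma isGenOnly_pair (u : FreeGroup X) :
    IsGenOnly [HLetter.gen u, HLetter.gen u⁻¹] := by
  intro l hl
  simp only [List.mem_cons, List.not_mem_nil, or_false] at hl
  rcases hl with rfl | rfl
  · exact ⟨u, rfl⟩
  · exact ⟨u⁻¹, rfl⟩

/-- From HNN reducedness, the two `t`-powers around a cancelling pair cannot have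
strictly opposite signs, so they merge. -/
lemma tPow_merge {w : List (HLetter X)}
    (hred : HNNReducedWord UA UB w) (Q R : List (HLetter X)) (u : FreeGroup X) (x n' : ℤ)
    (hw : w = Q ++ tPow x ++ [HLetter.gen u, HLetter.gen u⁻¹] ++ tPow n' ++ R) :
    (tPow (x + n') : List (HLetter X)) = tPow x ++ tPow n' := by
  apply tPow_add_of
  · rintro ⟨hx, hn⟩
    refine hred.2 (Q ++ tPow (x - 1)) [HLetter.gen u, HLetter.gen u⁻¹]
      (tPow (n' + 1) ++ R) ?_ (isGenOnly_pair u) ?_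
    · rw [hw, tPow_pos_last hx, tPow_neg_head hn]
      simp
    · rw [evalH_pair]; exact one_mem _
  · rintro ⟨hx, hn⟩
    refine hred.1 (Q ++ tPow (x + 1)) [HLetter.gen u, HLetter.gen u⁻¹]
      (tPow (n' - 1) ++ R) ?_ (isGenOnly_pair u) ?_
    · rw [hw, tPow_neg_last hx, tPow_pos_head hn]
      simp
    · rw [evalH_pair]; exact one_mem _

lemma elemSemi_delGenAt (φ : ↥(Subgroup.closure UA) ≃* ↥(Subgroup.closure UB)) (j : ℕ)
    {z z' : List (HLetter X)} (h : ElemSemi φ z z') :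
    delGenAt j z = delGenAt j z' ∨ ElemSemi φ (delGenAt j z) (delGenAt j z') := by
  obtain ⟨p, s, a, ha, hcase⟩ := h
  rcases lt_trichotomy j (genCount p) with hj | hj | hj
  · right
    have e : ∀ L : List (HLetter X), delGenAt j (p ++ L) = delGenAt j p ++ L :=
      fun L => delGenAt_append_lt L hj
    refine ⟨delGenAt j p, s, a, ha, ?_⟩
    rcases hcase with ⟨h1, h2⟩ | ⟨h1, h2⟩ | ⟨h1, h2⟩ | ⟨h1, h2⟩
    · exact Or.inl ⟨by simp [h1, List.append_assoc, e], by simp [h2, List.append_assoc, e]⟩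
    · exact Or.inr (Or.inl ⟨by simp [h1, List.append_assoc, e],
        by simp [h2, List.append_assoc, e]⟩)
    · exact Or.inr (Or.inr (Or.inl ⟨by simp [h1, List.append_assoc, e],
        by simp [h2, List.append_assoc, e]⟩))
    · exact Or.inr (Or.inr (Or.inr ⟨by simp [h1, List.append_assoc, e],
        by simp [h2, List.append_assoc, e]⟩))
  · left
    have e : ∀ L : List (HLetter X), delGenAt j (p ++ L) = p ++ delGenAt 0 L := by
      intro L
      rw [delGenAt_append_ge L (le_of_eq hj.symm), hj, Nat.sub_self]
    rcases hcase with ⟨h1, h2⟩ | ⟨h1, h2⟩ | ⟨h1, h2⟩ | ⟨h1, h2⟩ <;>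
      simp [h1, h2, List.append_assoc, e, delGenAt]
  · right
    obtain ⟨k, hk⟩ : ∃ k, j - genCount p = k + 1 := ⟨j - genCount p - 1, by omega⟩
    have e : ∀ L : List (HLetter X), delGenAt j (p ++ L) = p ++ delGenAt (k + 1) L := by
      intro L
      rw [delGenAt_append_ge L (by omega), hk]
    refine ⟨p, delGenAt k s, a, ha, ?_⟩
    rcases hcase with ⟨h1, h2⟩ | ⟨h1, h2⟩ | ⟨h1, h2⟩ | ⟨h1, h2⟩
    · exact Or.inl ⟨by simp [h1, List.append_assoc, e, delGenAt],
        by simp [h2, List.append_assoc, e, delGenAt]⟩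
    · exact Or.inr (Or.inl ⟨by simp [h1, List.append_assoc, e, delGenAt],
        by simp [h2, List.append_assoc, e, delGenAt]⟩)
    · exact Or.inr (Or.inr (Or.inl ⟨by simp [h1, List.append_assoc, e, delGenAt],
        by simp [h2, List.append_assoc, e, delGenAt]⟩))
    · exact Or.inr (Or.inr (Or.inr ⟨by simp [h1, List.append_assoc, e, delGenAt],
        by simp [h2, List.append_assoc, e, delGenAt]⟩))

lemma sim_delGenAt (φ : ↥(Subgroup.closure UA) ≃* ↥(Subgroup.closure UB)) (j : ℕ)
    {z z' : List (HLetter X)} (h : Sim φ z z') :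
    Sim φ (delGenAt j z) (delGenAt j z') := by
  induction h with
  | refl => exact Relation.ReflTransGen.refl
  | tail _ hstep ih =>
    rcases elemSemi_delGenAt φ j hstep with he | he
    · rwa [← he]
    · exact ih.tail he

lemma genCount_flatMap (l : List (FreeGroup X × ℤ)) :
    genCount (l.flatMap fun p => HLetter.gen p.1 :: tPow p.2) = l.length := by
  induction l with
  | nil => simp [genCount]
  | cons p rest ih =>
    rw [List.flatMap_cons, genCount_append, ih]
    simp [genCount, genCount_tPow]
    omega

lemma delGen2_blockWord (n0 : ℤ) (pre post : List (FreeGroup X × ℤ)) (u : FreeGroup X)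
    (n' : ℤ) :
    delGenAt pre.length (delGenAt pre.length
      (blockWord n0 (pre ++ [(u, 0), (u⁻¹, n')] ++ post))) =
    (tPow n0 ++ pre.flatMap fun p => HLetter.gen p.1 :: tPow p.2) ++
      (tPow n' ++ post.flatMap fun p => HLetter.gen p.1 :: tPow p.2) := by
  have hP : genCount
      ((tPow n0 ++ pre.flatMap fun p => HLetter.gen p.1 :: tPow p.2) : List (HLetter X)) =
      pre.length := by
    rw [genCount_append, genCount_tPow, genCount_flatMap, Nat.zero_add]
  have hshape : blockWord n0 (pre ++ [(u, 0), (u⁻¹, n')] ++ post) =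
      (tPow n0 ++ pre.flatMap fun p => HLetter.gen p.1 :: tPow p.2) ++
        (HLetter.gen u :: HLetter.gen u⁻¹ ::
          (tPow n' ++ post.flatMap fun p => HLetter.gen p.1 :: tPow p.2)) := by
    simp [blockWord, List.flatMap_append, tPow_zero]
  have hz : ∀ (x : FreeGroup X) (L : List (HLetter X)),
      delGenAt 0 (HLetter.gen x :: L) = L := by
    intro x L
    simp [delGenAt]
  rw [hshape, delGenAt_append_ge _ (le_of_eq hP), hP, Nat.sub_self, hz,
    delGenAt_append_ge _ (le_of_eq hP), hP, Nat.sub_self, hz]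

end HnnPaper


open HnnPaper

theorem statement_4
    (X : Type*) [Finite X]
    (UH UA UB : Set (FreeGroup X))
    (hUH : IsFreeBasis UH) (hUAH : UA ⊆ UH) (hUBH : UB ⊆ UH)
    (φ : ↥(Subgroup.closure UA) ≃* ↥(Subgroup.closure UB))
    (hφ : ∀ a : ↥(Subgroup.closure UA), (a : FreeGroup X) ∈ UA ∪ UA⁻¹ ↔
      ((φ a : ↥(Subgroup.closure UB)) : FreeGroup X) ∈ UB ∪ UB⁻¹)
    (w w' v v' : List (HLetter X)) (m : ℕ)
    (hw : WordOver (UH ∪ UH⁻¹) w) (hw' : WordOver (UH ∪ UH⁻¹) w')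
    (hv : WordOver (UH ∪ UH⁻¹) v) (hv' : WordOver (UH ∪ UH⁻¹) v')
    (hwred : HNNReducedWord UA UB w) (hw'red : HNNReducedWord UA UB w')
    (hvred : HNNReducedWord UA UB v) (hv'red : HNNReducedWord UA UB v')
    (hc : CancelAt m w v) (hsim : Sim φ w w') (hc' : CancelAt m w' v') :
    Sim φ v v' := by
  obtain ⟨n0, pre, post, u, n', hm, hwEq, hvCase⟩ := hc
  obtain ⟨m0, pre2, post2, u2, n2, hm2, hw'Eq, hv'Case⟩ := hc'
  have hj2 : pre2.length = pre.length := by omega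
  have hv1 : v = delGenAt pre.length (delGenAt pre.length w) := by
    rw [hwEq, delGen2_blockWord]
    rcases hvCase with ⟨hpre, hveq⟩ | ⟨pre', u', nl, hpre, hveq⟩
    · subst hpre
      have hmerge : (tPow (n0 + n') : List (HLetter X)) = tPow n0 ++ tPow n' :=
        tPow_merge hwred [] (post.flatMap fun p => HLetter.gen p.1 :: tPow p.2) u n0 n'
          (by rw [hwEq]; simp [blockWord, tPow_zero])
      rw [hveq]
      simp [blockWord, hmerge]
    · subst hpre
      have hmerge : (tPow (nl + n') : List (HLetter X)) = tPow nl ++ tPow n' :=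
        tPow_merge hwred
          (tPow n0 ++ (pre'.flatMap fun p => HLetter.gen p.1 :: tPow p.2) ++
            [HLetter.gen u'])
          (post.flatMap fun p => HLetter.gen p.1 :: tPow p.2) u nl n'
          (by rw [hwEq]; simp [blockWord, List.flatMap_append, tPow_zero])
      rw [hveq]
      simp [blockWord, List.flatMap_append, hmerge]
  have hv2 : v' = delGenAt pre.length (delGenAt pre.length w') := by
    rw [← hj2, hw'Eq, delGen2_blockWord]
    rcases hv'Case with ⟨hpre, hveq⟩ | ⟨pre', u', nl, hpre, hveq⟩
    · subst hpre
      have hmerge : (tPow (m0 + n2) : List (HLetter X)) = tPow m0 ++ tPow n2 :=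
        tPow_merge hw'red [] (post2.flatMap fun p => HLetter.gen p.1 :: tPow p.2) u2 m0 n2
          (by rw [hw'Eq]; simp [blockWord, tPow_zero])
      rw [hveq]
      simp [blockWord, hmerge]
    · subst hpre
      have hmerge : (tPow (nl + n2) : List (HLetter X)) = tPow nl ++ tPow n2 :=
        tPow_merge hw'red
          (tPow m0 ++ (pre'.flatMap fun p => HLetter.gen p.1 :: tPow p.2) ++
            [HLetter.gen u'])
          (post2.flatMap fun p => HLetter.gen p.1 :: tPow p.2) u2 nl n2
          (by rw [hw'Eq]; simp [blockWord, List.flatMap_append, tPow_zero])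
      rw [hveq]
      simp [blockWord, List.flatMap_append, hmerge]
  rw [hv1, hv2]
  exact sim_delGenAt φ _ (sim_delGenAt φ _ hsim)
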